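/- Let H be a hyperbolic rank-two lattice, v ∈ H with v² > 0, and u ∈ H primitive with u² = 0 and ⟨v,u⟩ > 0. Then there do not exist a, b ∈ H with u = a + b, a² ≥ 0, b² ≥ 0, ⟨v,a⟩ > 0 and ⟨v,b⟩ > 0. -/

import Mathlib

/-- A hyperbolic rank-two lattice: a free `ℤ`-module of rank two with an integral
symmetric bilinear form whose real extension has signature `(1,1)`; equivalently
(in rank two) the form takes both a positive and a negative value on the lattice. -/
def IsHyperbolicRankTwoLattice (H : Type*) [AddCommGroup H] [Module ℤ H]
    (B : H →ₗ[ℤ] H →ₗ[ℤ] ℤ) : Prop :=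
  Module.Free ℤ H ∧ Module.finrank ℤ H = 2 ∧ (∀ x y : H, B x y = B y x) ∧
    (∃ x : H, 0 < B x x) ∧ (∃ y : H, B y y < 0)

/-- `x` is primitive: `x = n • y` implies `n = ±1`. -/
def IsPrimitiveVec {H : Type*} [AddCommGroup H] [Module ℤ H] (x : H) : Prop :=
  ∀ (n : ℤ) (y : H), x = n • y → n = 1 ∨ n = -1

set_option maxHeartbeats 1000000 in
/-- A primitive isotropic class `u` with `⟨v,u⟩ > 0` cannot be decomposed as a sum of two
classes of the positive cone: it spans an extremal ray. -/
theorem stmt_7 (H : Type*) [AddCommGroup H] [Module ℤ H]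
    (B : H →ₗ[ℤ] H →ₗ[ℤ] ℤ) (hH : IsHyperbolicRankTwoLattice H B)
    (v u : H) (hv : 0 < B v v) (hu : B u u = 0)
    (hprim : IsPrimitiveVec u) (hvu : 0 < B v u) :
    ¬ ∃ a b : H, u = a + b ∧ 0 ≤ B a a ∧ 0 ≤ B b b ∧ 0 < B v a ∧ 0 < B v b := by
  obtain ⟨hfree, hrank, hsym, -, y, hy⟩ := hH
  haveI := hfree
  haveI : Module.Finite ℤ H := Module.finite_of_finrank_pos (by omega)
  rintro ⟨a, b, hab, ha, hb, hva, hvb⟩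
  -- coordinates w.r.t. a basis
  set bb := (Module.finBasis ℤ H).reindex (finCongr hrank) with hbb
  set r : H → Fin 2 → ℤ := fun w j => bb.repr w j with hrdef
  have hsmulr : ∀ (n : ℤ) (w : H) (j : Fin 2), r (n • w) j = n * r w j := by
    intro n w j
    show bb.repr (n • w) j = n * bb.repr w j
    calc bb.repr (n • w) j = (n • bb.repr w) j := by rw [map_zsmul]
      _ = n • (bb.repr w j) := map_zsmul (Finsupp.applyAddHom j) n (bb.repr w)
      _ = n * bb.repr w j := by rw [zsmul_eq_mul, Int.cast_id]
  have haddr : ∀ (w z : H) (j : Fin 2), r (w + z) j = r w j + r z j := by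
    intro w z j
    show bb.repr (w + z) j = bb.repr w j + bb.repr z j
    rw [map_add, Finsupp.add_apply]
  have hzeror : ∀ j : Fin 2, r (0 : H) j = 0 := by
    intro j
    show bb.repr (0 : H) j = 0
    rw [map_zero]
    rfl
  have hextr : ∀ w z : H, (∀ j, r w j = r z j) → w = z := by
    intro w z h
    exact bb.repr.injective (Finsupp.ext h)
  have hzror : ∀ w : H, (∀ j, r w j = 0) → w = 0 := by
    intro w h
    exact hextr w 0 (fun j => by rw [h j, hzeror j])
  clear_value r
  clear hrdef hbb
  -- cancellation of nonzero integer scalars (torsion-freeness)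
  have hcanc : ∀ (n : ℤ) (w : H), n ≠ 0 → n • w = 0 → w = 0 := by
    intro n w hn h
    apply hzror
    intro j
    have hj : n * r w j = 0 := by rw [← hsmulr, h, hzeror]
    rcases mul_eq_zero.mp hj with h' | h'
    · exact absurd h' hn
    · exact h'
  -- bilinear expansion helpers
  have hq1 : ∀ (m : ℤ) (s z : H), B z (m • s) = m * B z s := by
    intro m s z
    rw [map_zsmul, zsmul_eq_mul, Int.cast_id]
  have hq2 : ∀ (m n : ℤ) (s t : H),
      B (m • s + n • t) (m • s + n • t)
        = m * m * B s s + 2 * (m * n) * B s t + n * n * B t t := by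
    intro m n s t
    have h1 : ∀ z : H, B z (m • s + n • t) = m * B z s + n * B z t := by
      intro z
      rw [map_add, hq1, hq1]
    rw [h1, hsym _ s, hsym _ t, h1 s, h1 t, hsym t s]
    ring
  -- any nonzero vector orthogonal to v has negative square
  have L1 : ∀ x : H, B v x = 0 → x ≠ 0 → B x x < 0 := by
    intro x hvx hx
    by_contra hxx
    push_neg at hxx
    have hxv : B x v = 0 := by rw [hsym]; exact hvx
    set D : ℤ := r v 0 * r x 1 - r v 1 * r x 0 with hD
    rcases eq_or_ne D 0 with hD0 | hD0
    · -- v and x proportional: forces x = 0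
      have hxj : ∀ j : Fin 2, r x j = 0 := by
        intro j
        have e : (r x j) • v = (r v j) • x := by
          apply hextr
          intro k
          rw [hsmulr, hsmulr]
          fin_cases j <;> fin_cases k <;> simp only [Fin.mk_zero, Fin.mk_one]
          · ring
          · linear_combination -hD0
          · linear_combination hD0
          · ring
        have e' : B v ((r x j) • v) = B v ((r v j) • x) := congrArg (fun t => B v t) e
        rw [hq1, hq1, hvx, mul_zero] at e'
        rcases mul_eq_zero.mp e' with h' | h'
        · exact h'
        · omega
      exact hx (hzror x hxj)
    · set c1 : ℤ := r y 0 * r x 1 - r y 1 * r x 0 with hc1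
      set c2 : ℤ := r v 0 * r y 1 - r v 1 * r y 0 with hc2
      have hcr : D • y = c1 • v + c2 • x := by
        apply hextr
        intro k
        rw [haddr, hsmulr, hsmulr, hsmulr, hc1, hc2, hD]
        fin_cases k <;> simp only [Fin.mk_zero, Fin.mk_one] <;> ring
      have e1 : B (D • y) (D • y) = D * D * B y y := by
        rw [hq1, hsym (D • y) y, hq1]
        ring
      have e3 : D * D * B y y = c1 * c1 * B v v + c2 * c2 * B x x := by
        rw [← e1, hcr, hq2, hvx]
        ring
      have hDsq : 1 ≤ D * D := by
        rcases hD0.lt_or_gt with h | h <;> nlinarith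
      nlinarith [mul_le_mul_of_nonpos_right hDsq hy.le,
        mul_nonneg (mul_self_nonneg c1) hv.le,
        mul_nonneg (mul_self_nonneg c2) hxx, e3]
  -- expand u² = 0
  have h0 : B a a + 2 * B a b + B b b = 0 := by
    have h := hu
    rw [hab] at h
    simp only [map_add, LinearMap.add_apply] at h
    rw [hsym b a] at h
    linarith
  set p := B v a with hp
  set q := B v b with hq
  set S : H := q • a - p • b with hS
  clear_value p q S
  have hexp : ∀ w : H, B w S = q * B w a - p * B w b := by
    intro w
    rw [hS, map_sub, hq1, hq1]
  have hvS : B v S = 0 := by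
    rw [hexp v, ← hp, ← hq]
    ring
  by_cases hS0 : S = 0
  · -- proportionality case
    have hqa : q • a = p • b := by
      rwa [hS, sub_eq_zero] at hS0
    have hnu : (p + q) • a = p • u := by
      rw [hab, add_zsmul, zsmul_add, hqa]
    have hmpos : 0 < p := hva
    have hgcdpos : 0 < Int.gcd p (p + q) := Int.gcd_pos_of_ne_zero_left (p + q) hmpos.ne'
    set d : ℤ := (Int.gcd p (p + q) : ℤ) with hd
    have hdpos : 0 < d := by rw [hd]; exact_mod_cast hgcdpos
    set m' : ℤ := p / d with hm'
    set n' : ℤ := (p + q) / d with hn'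
    have hdm : d ∣ p := Int.gcd_dvd_left p (p + q)
    have hdn : d ∣ (p + q) := Int.gcd_dvd_right p (p + q)
    have hmm : p = d * m' := by rw [hm', Int.mul_ediv_cancel' hdm]
    have hnn : p + q = d * n' := by rw [hn', Int.mul_ediv_cancel' hdn]
    have hcop : Int.gcd m' n' = 1 := Int.gcd_div_gcd_div_gcd hgcdpos
    have hdiff : d • (n' • a - m' • u) = 0 := by
      rw [zsmul_sub, ← mul_zsmul, ← mul_zsmul, ← hnn, ← hmm, hnu, sub_self]
    have hcancel : n' • a = m' • u :=
      sub_eq_zero.mp (hcanc d _ hdpos.ne' hdiff)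
    set xx : ℤ := Int.gcdA m' n' with hxxdef
    set yy : ℤ := Int.gcdB m' n' with hyydef
    have hbez : (1 : ℤ) = m' * xx + n' * yy := by
      rw [hxxdef, hyydef, ← Int.gcd_eq_gcd_ab m' n']
      exact_mod_cast hcop.symm
    have hudec : u = n' • (xx • a + yy • u) := by
      calc u = (1 : ℤ) • u := (one_zsmul u).symm
        _ = (m' * xx + n' * yy) • u := by rw [← hbez]
        _ = (m' * xx) • u + (n' * yy) • u := add_zsmul u _ _
        _ = xx • (m' • u) + n' • (yy • u) := by
            rw [mul_comm m' xx, mul_zsmul, mul_zsmul]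
        _ = xx • (n' • a) + n' • (yy • u) := by rw [hcancel]
        _ = n' • (xx • a + yy • u) := by
            rw [zsmul_add, ← mul_zsmul, ← mul_zsmul, ← mul_zsmul, mul_comm xx n']
    have hn'1 : 1 < n' := by
      have hdlem : d ≤ p := Int.le_of_dvd hmpos hdm
      have h : d * 1 < d * n' := by rw [mul_one, ← hnn]; omega
      exact lt_of_mul_lt_mul_left h hdpos.le
    rcases hprim n' (xx • a + yy • u) hudec with h | h <;> omega
  · -- S ≠ 0 : contradiction with L1
    have hSS := L1 S hvS hS0
    have eS : B S S = q * (q * B a a - p * B a b) - p * (q * B b a - p * B b b) := by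
      rw [hexp S, hsym S a, hsym S b, hexp a, hexp b]
    rw [hsym b a] at eS
    rw [eS] at hSS
    nlinarith [mul_nonneg (mul_nonneg hvb.le hvb.le) ha,
      mul_nonneg (mul_nonneg hva.le hva.le) hb,
      mul_nonneg (mul_pos hvb hva).le (by linarith : (0:ℤ) ≤ -(2 * B a b))]
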